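/- Let a_1, …, a_n and b_1, …, b_n be real numbers with a_μ ≥ 1 and b_μ ≥ 1 for every μ. Then ∏_{μ=1}^{n} (a_μ + b_μ − 1) ≥ ∏_{μ=1}^{n} a_μ + ∏_{μ=1}^{n} b_μ − 1. -/
import Mathlib


/-- Inequality (3.3): if `a_μ ≥ 1` and `b_μ ≥ 1` for all `μ`, then
`∏_μ (a_μ + b_μ − 1) ≥ ∏_μ a_μ + ∏_μ b_μ − 1`. -/
theorem prod_add_sub_one_ge {n : ℕ} (a b : Fin n → ℝ)
    (ha : ∀ μ, 1 ≤ a μ) (hb : ∀ μ, 1 ≤ b μ) :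
    ∏ μ, (a μ + b μ - 1) ≥ (∏ μ, a μ) + (∏ μ, b μ) - 1 := by
  induction n with
  | zero => simp
  | succ n ih =>
    rw [Fin.prod_univ_succ, Fin.prod_univ_succ, Fin.prod_univ_succ]
    have ihs := ih (fun i => a i.succ) (fun i => b i.succ)
      (fun i => ha _) (fun i => hb _)
    have hA : (1:ℝ) ≤ ∏ i, a (Fin.succ i) := by
      calc (1:ℝ) = ∏ _i : Fin n, (1:ℝ) := by simp
        _ ≤ _ := Finset.prod_le_prod (fun i _ => zero_le_one) (fun i _ => ha _)
    have hB : (1:ℝ) ≤ ∏ i, b (Fin.succ i) := by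
      calc (1:ℝ) = ∏ _i : Fin n, (1:ℝ) := by simp
        _ ≤ _ := Finset.prod_le_prod (fun i _ => zero_le_one) (fun i _ => hb _)
    have ha0 := ha 0
    have hb0 := hb 0
    nlinarith [ihs, hA, hB, ha0, hb0, mul_nonneg (sub_nonneg.2 ha0) (sub_nonneg.2 hB),
      mul_nonneg (sub_nonneg.2 hb0) (sub_nonneg.2 hA)]
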